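/- Let n ≥ 1 and let ρ = |ψ⟩⟨ψ| be a pure 2⊗n state, i.e., ρ is the rank-one matrix ρ_{(i,k),(j,l)} = ψ(i,k)·conj(ψ(j,l)) for a unit vector ψ ∈ ℂ^{2n}. Then the partial transpose ρ^{T_A} has at most one negative eigenvalue, counted with multiplicity. -/

import Mathlib

open Matrix

noncomputable section

/-- Partial transpose with respect to the first (qubit) factor. -/
def ptA {n : ℕ} (ρ : Matrix (Fin 2 × Fin n) (Fin 2 × Fin n) ℂ) :
    Matrix (Fin 2 × Fin n) (Fin 2 × Fin n) ℂ :=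
  fun p q => ρ (q.1, p.2) (p.1, q.2)

private lemma aux_no_two_neg {n : ℕ} (ψ : Fin 2 × Fin n → ℂ)
    (M : Matrix (Fin 2 × Fin n) (Fin 2 × Fin n) ℂ)
    (hM : M = fun p q => ψ (q.1, p.2) * starRingEnd ℂ (ψ (p.1, q.2)))
    (v w : Fin 2 × Fin n → ℂ) (l1 l2 : ℝ) (hl1 : l1 < 0) (hl2 : l2 < 0)
    (hMv : ∀ p, (M *ᵥ v) p = (l1 : ℂ) * v p)
    (hMw : ∀ p, (M *ᵥ w) p = (l2 : ℂ) * w p)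
    (hvv : ∑ p, starRingEnd ℂ (v p) * v p = 1)
    (hww : ∑ p, starRingEnd ℂ (w p) * w p = 1)
    (hvw : ∑ p, starRingEnd ℂ (v p) * w p = 0)
    (hwv : ∑ p, starRingEnd ℂ (w p) * v p = 0) : False := by
  set f : ((Fin 2 × Fin n) → ℂ) → ℂ :=
    fun x => ∑ k, starRingEnd ℂ (x (1, k)) * ψ (0, k) with hf
  set a : ℂ := if f v = 0 then 1 else starRingEnd ℂ (f w) with ha
  set b : ℂ := if f v = 0 then 0 else -(starRingEnd ℂ) (f v) with hb
  set x : (Fin 2 × Fin n) → ℂ := fun p => a * v p + b * w p with hx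
  have hfx : f x = 0 := by
    have h1 : f x = (starRingEnd ℂ) a * f v + (starRingEnd ℂ) b * f w := by
      simp only [hf, hx]
      rw [Finset.mul_sum, Finset.mul_sum, ← Finset.sum_add_distrib]
      refine Finset.sum_congr rfl fun k _ => ?_
      simp only [map_add, _root_.map_mul]
      ring
    rw [h1, ha, hb]
    by_cases h0 : f v = 0 <;> simp [h0] <;> ring
  -- eigenvalue computation of the quadratic form
  have hform1 : star x ⬝ᵥ (M *ᵥ x)
      = (Complex.normSq a * l1 + Complex.normSq b * l2 : ℝ) := by
    have hMx : ∀ p, (M *ᵥ x) p = a * ((l1 : ℂ) * v p) + b * ((l2 : ℂ) * w p) := by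
      intro p
      have h2 : (M *ᵥ x) p = a * (M *ᵥ v) p + b * (M *ᵥ w) p := by
        simp only [mulVec, dotProduct, hx]
        rw [Finset.mul_sum, Finset.mul_sum, ← Finset.sum_add_distrib]
        refine Finset.sum_congr rfl fun q _ => ?_
        ring
      rw [h2, hMv, hMw]
    have expand : star x ⬝ᵥ (M *ᵥ x)
        = (starRingEnd ℂ) a * a * (l1 : ℂ) * (∑ p, (starRingEnd ℂ) (v p) * v p)
        + (starRingEnd ℂ) a * b * (l2 : ℂ) * (∑ p, (starRingEnd ℂ) (v p) * w p)
        + (starRingEnd ℂ) b * a * (l1 : ℂ) * (∑ p, (starRingEnd ℂ) (w p) * v p)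
        + (starRingEnd ℂ) b * b * (l2 : ℂ) * (∑ p, (starRingEnd ℂ) (w p) * w p) := by
      simp only [dotProduct, Pi.star_apply, RCLike.star_def]
      simp only [Finset.mul_sum, ← Finset.sum_add_distrib]
      refine Finset.sum_congr rfl fun p _ => ?_
      rw [hMx p]
      simp only [hx, map_add, _root_.map_mul]
      ring
    rw [expand, hvv, hww, hvw, hwv]
    push_cast [← Complex.mul_conj]
    ring
  -- direct computation of the quadratic form
  set A : Fin 2 → Fin 2 → ℂ := fun i' j' => ∑ k, (starRingEnd ℂ) (x (i', k)) * ψ (j', k) with hA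
  have hAconj : ∀ i' j' : Fin 2,
      (starRingEnd ℂ) (A j' i') = ∑ l, (starRingEnd ℂ) (ψ (i', l)) * x (j', l) := by
    intro i' j'
    simp only [hA, map_sum, _root_.map_mul, Complex.conj_conj]
    refine Finset.sum_congr rfl fun l _ => ?_; ring
  have hform2 : star x ⬝ᵥ (M *ᵥ x)
      = ∑ i' : Fin 2, ∑ j' : Fin 2, A i' j' * (starRingEnd ℂ) (A j' i') := by
    calc star x ⬝ᵥ (M *ᵥ x)
        = ∑ i' : Fin 2, ∑ k, ∑ j' : Fin 2, ∑ l,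
            ((starRingEnd ℂ) (x (i', k)) * ψ (j', k))
              * ((starRingEnd ℂ) (ψ (i', l)) * x (j', l)) := by
          simp only [dotProduct, mulVec, dotProduct, hM, Pi.star_apply, RCLike.star_def]
          rw [Fintype.sum_prod_type]
          refine Finset.sum_congr rfl fun i' _ => Finset.sum_congr rfl fun k _ => ?_
          rw [Finset.mul_sum, Fintype.sum_prod_type]
          refine Finset.sum_congr rfl fun j' _ => ?_
          refine Finset.sum_congr rfl fun l _ => ?_
          dsimp only
          ring
      _ = ∑ i' : Fin 2, ∑ j' : Fin 2,
            (∑ k, (starRingEnd ℂ) (x (i', k)) * ψ (j', k))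
              * (∑ l, (starRingEnd ℂ) (ψ (i', l)) * x (j', l)) := by
          refine Finset.sum_congr rfl fun i' _ => ?_
          rw [Finset.sum_comm]
          refine Finset.sum_congr rfl fun j' _ => ?_
          rw [Finset.sum_mul_sum]
      _ = ∑ i' : Fin 2, ∑ j' : Fin 2, A i' j' * (starRingEnd ℂ) (A j' i') := by
          refine Finset.sum_congr rfl fun i' _ => Finset.sum_congr rfl fun j' _ => ?_
          rw [hAconj]
  have hA10 : A 1 0 = 0 := hfx
  have hpos : 0 ≤ (star x ⬝ᵥ (M *ᵥ x)).re := by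
    rw [hform2]
    simp only [Fin.sum_univ_two, hA10, map_zero, mul_zero, zero_mul, add_zero, zero_add]
    rw [Complex.mul_conj, Complex.mul_conj]
    simp only [Complex.add_re, Complex.ofReal_re]
    exact add_nonneg (Complex.normSq_nonneg _) (Complex.normSq_nonneg _)
  have hneg : (star x ⬝ᵥ (M *ᵥ x)).re < 0 := by
    rw [hform1, Complex.ofReal_re]
    by_cases h0 : f v = 0
    · rw [ha, hb, if_pos h0, if_pos h0]
      simpa using hl1
    · have hb0 : Complex.normSq b ≠ 0 := by
        rw [hb, if_neg h0]
        simpa using h0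
      have h1 : Complex.normSq a * l1 ≤ 0 :=
        mul_nonpos_of_nonneg_of_nonpos (Complex.normSq_nonneg a) hl1.le
      have h2 : Complex.normSq b * l2 < 0 :=
        mul_neg_of_pos_of_neg (lt_of_le_of_ne (Complex.normSq_nonneg b) (Ne.symm hb0)) hl2
      linarith
  linarith

/-- Partial transposition of any pure `2 ⊗ n` state `|ψ⟩⟨ψ|` has at most one
negative eigenvalue (counted with multiplicity). -/
theorem pt_pure_state_neg_eigenvalues_le_one {n : ℕ} (hn : 1 ≤ n)
    (ψ : Fin 2 × Fin n → ℂ) (hψ : ∑ p, Complex.normSq (ψ p) = 1)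
    (ρ : Matrix (Fin 2 × Fin n) (Fin 2 × Fin n) ℂ)
    (hρ : ρ = fun p q => ψ p * starRingEnd ℂ (ψ q))
    (hH : (ptA ρ).IsHermitian) :
    (Finset.univ.filter fun i => hH.eigenvalues i < 0).card ≤ 1 := by
  by_contra hcard
  push_neg at hcard
  obtain ⟨i, hi, j, hj, hij⟩ := Finset.one_lt_card.mp hcard
  simp only [Finset.mem_filter, Finset.mem_univ, true_and] at hi hj
  have hinner : ∀ (u y : EuclideanSpace ℂ (Fin 2 × Fin n)),
      (inner ℂ u y : ℂ) = ∑ p, (starRingEnd ℂ) (u p) * y p :=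
    fun u y => by simp [PiLp.inner_apply, RCLike.inner_apply, mul_comm]
  have horth := orthonormal_iff_ite.mp hH.eigenvectorBasis.orthonormal
  refine aux_no_two_neg ψ (ptA ρ) (by rw [hρ]; rfl)
    (⇑(hH.eigenvectorBasis i)) (⇑(hH.eigenvectorBasis j))
    (hH.eigenvalues i) (hH.eigenvalues j) hi hj
    (fun p => ?_) (fun p => ?_) ?_ ?_ ?_ ?_
  · have := congrFun (hH.mulVec_eigenvectorBasis i) p
    simpa [Complex.real_smul] using this
  · have := congrFun (hH.mulVec_eigenvectorBasis j) p
    simpa [Complex.real_smul] using this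
  · rw [← hinner]; simpa using horth i i
  · rw [← hinner]; simpa using horth j j
  · rw [← hinner]; simpa [hij] using horth i j
  · rw [← hinner]; simpa [hij.symm] using horth j i
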